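/- (Proposition 2: double-minimization representation.) For every s=(s₁,s₂) with s₁>0, s₂>0, the minimum over test-channel pairs P of the inner infimum inf_Q F_s(P,Q) equals min_P F_s(P); that is, min_P inf_Q F_s(P,Q) = min_P F_s(P), and any P* attaining min_P F_s(P) attains the double minimization (together with the auxiliary pmfs Q induced by P*). -/

import Mathlib

open Finset Real

noncomputable section

/-- Shannon entropy of a finitely supported nonnegative vector,
with the convention `0 · log 0 = 0` (natural logarithm). -/
def ent {α : Type} [Fintype α] (p : α → ℝ) : ℝ := ∑ a, Real.negMulLog (p a)

/-- `p` is a probability mass function on the finite alphabet `α`. -/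
def IsPmf {α : Type} [Fintype α] (p : α → ℝ) : Prop := (∀ a, 0 ≤ p a) ∧ ∑ a, p a = 1

/-- `w` is a conditional pmf (channel) from `α` to `β`. -/
def IsChan {α β : Type} [Fintype α] [Fintype β] (w : α → β → ℝ) : Prop := ∀ a, IsPmf (w a)

/-- Kullback–Leibler divergence between two vectors on a finite alphabet
(convention `0 · log (0/q) = 0` is automatic since `Real.log` of junk is multiplied by `0`). -/
def KL {α : Type} [Fintype α] (r q : α → ℝ) : ℝ := ∑ a, r a * Real.log (r a / q a)

variable {X Y1 Y2 U1 U2 : Type} [Fintype X] [Fintype Y1] [Fintype Y2] [Fintype U1] [Fintype U2]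

/-- The joint pmf `p(x,y₁,y₂,u₁,u₂) = p(x)p(y₁|x)p(y₂|x)p(u₁|y₁)p(u₂|y₂)`
induced by the CEO source `(pX, W1, W2)` and a test-channel pair `(p1, p2)`. -/
def ceoJoint (pX : X → ℝ) (W1 : X → Y1 → ℝ) (W2 : X → Y2 → ℝ)
    (p1 : Y1 → U1 → ℝ) (p2 : Y2 → U2 → ℝ) : X × Y1 × Y2 × U1 × U2 → ℝ :=
  fun z => pX z.1 * W1 z.1 z.2.1 * W2 z.1 z.2.2.1 * p1 z.2.1 z.2.2.2.1 * p2 z.2.2.1 z.2.2.2.2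

/-- Marginal `p(x,u₁,u₂)`. -/
def mXU (j : X × Y1 × Y2 × U1 × U2 → ℝ) : X × U1 × U2 → ℝ :=
  fun z => ∑ y1, ∑ y2, j (z.1, y1, y2, z.2.1, z.2.2)

/-- Marginal `p(u₁,u₂)`. -/
def mU12 (j : X × Y1 × Y2 × U1 × U2 → ℝ) : U1 × U2 → ℝ :=
  fun u => ∑ x, mXU j (x, u.1, u.2)

/-- Marginal `p(u₂)`. -/
def mU2 (j : X × Y1 × Y2 × U1 × U2 → ℝ) : U2 → ℝ := fun u2 => ∑ u1, mU12 j (u1, u2)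

/-- Marginal `p(y₁,u₁,u₂)`. -/
def mY1U (j : X × Y1 × Y2 × U1 × U2 → ℝ) : Y1 × U1 × U2 → ℝ :=
  fun z => ∑ x, ∑ y2, j (x, z.1, y2, z.2.1, z.2.2)

/-- Marginal `p(y₁,u₂)`. -/
def mY1U2 (j : X × Y1 × Y2 × U1 × U2 → ℝ) : Y1 × U2 → ℝ :=
  fun z => ∑ u1, mY1U j (z.1, u1, z.2)

/-- Marginal `p(y₂,u₂)`. -/
def mY2U2 (j : X × Y1 × Y2 × U1 × U2 → ℝ) : Y2 × U2 → ℝ :=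
  fun z => ∑ x, ∑ y1, ∑ u1, j (x, y1, z.1, u1, z.2)

/-- Marginal `p(y₂)`. -/
def mY2 (j : X × Y1 × Y2 × U1 × U2 → ℝ) : Y2 → ℝ := fun y2 => ∑ u2, mY2U2 j (y2, u2)

/-- Conditional entropy `H(X|U₁,U₂)` of the joint pmf `j`. -/
def condHX (j : X × Y1 × Y2 × U1 × U2 → ℝ) : ℝ := ent (mXU j) - ent (mU12 j)

/-- Conditional mutual information `I(Y₁;U₁|U₂)` of the joint pmf `j`. -/
def I1c (j : X × Y1 × Y2 × U1 × U2 → ℝ) : ℝ :=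
  ent (mY1U2 j) + ent (mU12 j) - ent (mU2 j) - ent (mY1U j)

/-- Mutual information `I(Y₂;U₂)` of the joint pmf `j`. -/
def I2m (j : X × Y1 × Y2 × U1 × U2 → ℝ) : ℝ := ent (mY2 j) + ent (mU2 j) - ent (mY2U2 j)

/-- The functional `F_s(P) = H(X|U₁,U₂) + s₁ I(Y₁;U₁|U₂) + s₂ I(Y₂;U₂)`. -/
def Fs (s1 s2 : ℝ) (j : X × Y1 × Y2 × U1 × U2 → ℝ) : ℝ :=
  condHX j + s1 * I1c j + s2 * I2m j

/-- `D¹_CEO(R₁,R₂)`: the minimal `H(X|U₁,U₂)` over test-channel pairs into the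
auxiliary alphabets `V1`, `V2`, subject to `I(Y₁;U₁|U₂) ≤ R₁` and `I(Y₂;U₂) ≤ R₂`. -/
def Dceo1 (V1 V2 : Type) [Fintype V1] [Fintype V2]
    (pX : X → ℝ) (W1 : X → Y1 → ℝ) (W2 : X → Y2 → ℝ) (R1 R2 : ℝ) : ℝ :=
  sInf {d : ℝ | ∃ p1 : Y1 → V1 → ℝ, ∃ p2 : Y2 → V2 → ℝ, IsChan p1 ∧ IsChan p2 ∧
    I1c (ceoJoint pX W1 W2 p1 p2) ≤ R1 ∧ I2m (ceoJoint pX W1 W2 p1 p2) ≤ R2 ∧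
    d = condHX (ceoJoint pX W1 W2 p1 p2)}

/-- Marginal `p(y₁)` of the source. -/
def pY1m (pX : X → ℝ) (W1 : X → Y1 → ℝ) : Y1 → ℝ := fun y1 => ∑ x, pX x * W1 x y1

/-- Marginal `p(y₂)` of the source. -/
def pY2m (pX : X → ℝ) (W2 : X → Y2 → ℝ) : Y2 → ℝ := fun y2 => ∑ x, pX x * W2 x y2

/-- `p(u₁|x) = Σ_{y₁} p(y₁|x) p(u₁|y₁)`. -/
def pU1X (W1 : X → Y1 → ℝ) (p1 : Y1 → U1 → ℝ) : X → U1 → ℝ :=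
  fun x u1 => ∑ y1, W1 x y1 * p1 y1 u1

/-- `p(u₂|x) = Σ_{y₂} p(y₂|x) p(u₂|y₂)`. -/
def pU2X (W2 : X → Y2 → ℝ) (p2 : Y2 → U2 → ℝ) : X → U2 → ℝ :=
  fun x u2 => ∑ y2, W2 x y2 * p2 y2 u2

/-- `p(u₁,u₂,x) = p(x) p(u₁|x) p(u₂|x)`. -/
def pUUX (pX : X → ℝ) (W1 : X → Y1 → ℝ) (W2 : X → Y2 → ℝ)
    (p1 : Y1 → U1 → ℝ) (p2 : Y2 → U2 → ℝ) : U1 × U2 × X → ℝ :=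
  fun z => pX z.2.2 * pU1X W1 p1 z.2.2 z.1 * pU2X W2 p2 z.2.2 z.2.1

/-- `p(u₁,u₂)`. -/
def pUU (pX : X → ℝ) (W1 : X → Y1 → ℝ) (W2 : X → Y2 → ℝ)
    (p1 : Y1 → U1 → ℝ) (p2 : Y2 → U2 → ℝ) : U1 × U2 → ℝ :=
  fun u => ∑ x, pUUX pX W1 W2 p1 p2 (u.1, u.2, x)

/-- `p(u₂) = Σ_{y₂} p(y₂) p(u₂|y₂)`. -/
def pU2m (pX : X → ℝ) (W2 : X → Y2 → ℝ) (p2 : Y2 → U2 → ℝ) : U2 → ℝ :=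
  fun u2 => ∑ y2, pY2m pX W2 y2 * p2 y2 u2

/-- The Blahut–Arimoto functional `F_s(P,Q)` (real-valued version; the convention
`0 · log 0 = 0` is automatic since vanishing coefficients kill the corresponding terms). -/
def FsPQ (s1 s2 : ℝ) (pX : X → ℝ) (W1 : X → Y1 → ℝ) (W2 : X → Y2 → ℝ)
    (p1 : Y1 → U1 → ℝ) (p2 : Y2 → U2 → ℝ)
    (qX : U1 × U2 → X → ℝ) (qUU : U1 × U2 → ℝ) (qU2 : U2 → ℝ) : ℝ :=
  -(∑ u1, ∑ u2, ∑ x, pUUX pX W1 W2 p1 p2 (u1, u2, x) * Real.log (qX (u1, u2) x))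
  - s1 * (∑ u1, ∑ u2, pUU pX W1 W2 p1 p2 (u1, u2) * Real.log (qUU (u1, u2)))
  - s2 * (∑ u2, pU2m pX W2 p2 u2 * Real.log (qU2 u2))
  + s1 * (∑ u1, ∑ y1, p1 y1 u1 * pY1m pX W1 y1 * Real.log (p1 y1 u1))
  + s2 * (∑ u2, ∑ y2, p2 y2 u2 * pY2m pX W2 y2 * Real.log (p2 y2 u2))
  + s1 * (∑ u2, pU2m pX W2 p2 u2 * Real.log (pU2m pX W2 p2 u2))

/-- The extended-real value of a term `−a · log q`: it is `+∞` if `a > 0` and `q = 0`. -/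
def nlogE (a q : ℝ) : EReal := if 0 < a ∧ q = 0 then ⊤ else ((-(a * Real.log q) : ℝ) : EReal)

/-- The Blahut–Arimoto functional `F_s(P,Q)`, with values in `ℝ ∪ {+∞}`
(a term `−a log q` with `a > 0` and `q = 0` is `+∞`). -/
def FsPQE (s1 s2 : ℝ) (pX : X → ℝ) (W1 : X → Y1 → ℝ) (W2 : X → Y2 → ℝ)
    (p1 : Y1 → U1 → ℝ) (p2 : Y2 → U2 → ℝ)
    (qX : U1 × U2 → X → ℝ) (qUU : U1 × U2 → ℝ) (qU2 : U2 → ℝ) : EReal :=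
  (∑ u1, ∑ u2, ∑ x, nlogE (pUUX pX W1 W2 p1 p2 (u1, u2, x)) (qX (u1, u2) x))
  + (s1 : EReal) * (∑ u1, ∑ u2, nlogE (pUU pX W1 W2 p1 p2 (u1, u2)) (qUU (u1, u2)))
  + (s2 : EReal) * (∑ u2, nlogE (pU2m pX W2 p2 u2) (qU2 u2))
  + ((s1 * (∑ u1, ∑ y1, p1 y1 u1 * pY1m pX W1 y1 * Real.log (p1 y1 u1))
      + s2 * (∑ u2, ∑ y2, p2 y2 u2 * pY2m pX W2 y2 * Real.log (p2 y2 u2))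
      + s1 * (∑ u2, pU2m pX W2 p2 u2 * Real.log (pU2m pX W2 p2 u2)) : ℝ) : EReal)

/-- The conditional pmf `q*(x|u₁,u₂) = p(x|u₁,u₂)` induced by a test-channel pair
(an arbitrary conditional pmf, here uniform, when `p(u₁,u₂) = 0`). -/
def qXstar (pX : X → ℝ) (W1 : X → Y1 → ℝ) (W2 : X → Y2 → ℝ)
    (p1 : Y1 → U1 → ℝ) (p2 : Y2 → U2 → ℝ) : U1 × U2 → X → ℝ :=
  fun u x => if pUU pX W1 W2 p1 p2 u = 0 then ((Fintype.card X : ℝ))⁻¹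
    else pUUX pX W1 W2 p1 p2 (u.1, u.2, x) / pUU pX W1 W2 p1 p2 u

section helpers
variable {ι : Type*} [Fintype ι]

lemma ereal_coe_fsum {κ : Type*} (s : Finset κ) (f : κ → ℝ) :
    ((∑ i ∈ s, f i : ℝ) : EReal) = ∑ i ∈ s, (f i : EReal) := by
  induction s using Finset.cons_induction with
  | empty => simp
  | cons i s hi ih => rw [Finset.sum_cons, Finset.sum_cons, EReal.coe_add, ih]

lemma ereal_sum_ne_bot {κ : Type*} {s : Finset κ} {f : κ → EReal}
    (h : ∀ i ∈ s, f i ≠ ⊥) : ∑ i ∈ s, f i ≠ ⊥ := by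
  induction s using Finset.cons_induction with
  | empty => simp
  | cons i s hi ih =>
      rw [Finset.sum_cons]
      intro hc
      rcases EReal.add_eq_bot_iff.1 hc with hc | hc
      · exact h i (Finset.mem_cons_self i s) hc
      · exact ih (fun j hj => h j (Finset.mem_cons_of_mem hj)) hc

lemma ereal_sum_eq_top {κ : Type*} {s : Finset κ} {f : κ → EReal}
    (h : ∀ i ∈ s, f i ≠ ⊥) {i : κ} (hi : i ∈ s) (ht : f i = ⊤) : ∑ j ∈ s, f j = ⊤ := by
  classical
  rw [← Finset.add_sum_erase _ f hi, ht]
  exact EReal.top_add_of_ne_bot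
    (ereal_sum_ne_bot fun j hj => h j (Finset.mem_of_mem_erase hj))

lemma nlogE_ne_bot (a q : ℝ) : nlogE a q ≠ ⊥ := by
  unfold nlogE; split
  · simp
  · exact EReal.coe_ne_bot _

lemma nlogE_sum_finite (a q : ι → ℝ) (h : ∀ i, 0 < a i → q i ≠ 0) :
    ∑ i, nlogE (a i) (q i) = ((-∑ i, a i * Real.log (q i) : ℝ) : EReal) := by
  have : ∀ i, nlogE (a i) (q i) = ((-(a i * Real.log (q i)) : ℝ) : EReal) := by
    intro i
    unfold nlogE
    rw [if_neg]
    rintro ⟨h1, h2⟩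
    exact h i h1 h2
  rw [Finset.sum_congr rfl (fun i _ => this i), ← ereal_coe_fsum]
  norm_num

lemma nlogE_sum_top (a q : ι → ℝ) {i : ι} (h : 0 < a i ∧ q i = 0) :
    ∑ j, nlogE (a j) (q j) = ⊤ := by
  exact ereal_sum_eq_top (fun j _ => nlogE_ne_bot _ _) (Finset.mem_univ i)
    (by unfold nlogE; rw [if_pos h])


lemma sum_zero_of_nonneg {a : ι → ℝ} (ha : ∀ i, 0 ≤ a i) (h : ∑ i, a i = 0) (i : ι) :
    a i = 0 :=
  (Finset.sum_eq_zero_iff_of_nonneg (fun i _ => ha i)).1 h i (Finset.mem_univ i)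

lemma gibbs_real (a q : ι → ℝ) (ha : ∀ i, 0 ≤ a i) (hq : ∀ i, 0 ≤ q i)
    (hq1 : ∑ i, q i ≤ 1) (hpos : ∀ i, 0 < a i → q i ≠ 0) :
    ∑ i, a i * Real.log (q i) ≤ ∑ i, a i * Real.log (a i / ∑ j, a j) := by
  set A := ∑ j, a j with hA
  have hA0 : 0 ≤ A := Finset.sum_nonneg fun i _ => ha i
  rcases eq_or_lt_of_le hA0 with hA0' | hApos
  · have h0 : ∀ i, a i = 0 := sum_zero_of_nonneg ha hA0'.symm
    simp [h0]
  · have key : ∀ i, a i - A * q i ≤ a i * Real.log (a i / A) - a i * Real.log (q i) := by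
      intro i
      rcases eq_or_lt_of_le (ha i) with h0 | hai
      · rw [← h0]
        nlinarith [mul_nonneg hApos.le (hq i)]
      · have hqi : 0 < q i := lt_of_le_of_ne (hq i) (Ne.symm (hpos i hai))
        have h1 : Real.log ((A * q i) / a i) ≤ (A * q i) / a i - 1 :=
          Real.log_le_sub_one_of_pos (by positivity)
        have h2 : Real.log (a i / A) - Real.log (q i) = - Real.log ((A * q i) / a i) := by
          rw [Real.log_div (ne_of_gt hai) (ne_of_gt hApos),
              Real.log_div (by positivity) (ne_of_gt hai),
              Real.log_mul (ne_of_gt hApos) (ne_of_gt hqi)]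
          ring
        have h3 : a i * ((A * q i) / a i - 1) = A * q i - a i := by
          field_simp
        have h4 := mul_le_mul_of_nonneg_left h1 hai.le
        rw [h3] at h4
        nlinarith [h2, h4]
    have hsum : ∑ i, (a i - A * q i)
        ≤ ∑ i, (a i * Real.log (a i / A) - a i * Real.log (q i)) :=
      Finset.sum_le_sum (fun i _ => key i)
    have e1 : ∑ i, (a i - A * q i) = A - A * ∑ i, q i := by
      rw [Finset.sum_sub_distrib, ← Finset.mul_sum]
    have e2 : ∑ i, (a i * Real.log (a i / A) - a i * Real.log (q i))
        = (∑ i, a i * Real.log (a i / A)) - ∑ i, a i * Real.log (q i) :=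
      Finset.sum_sub_distrib _ _
    rw [e1, e2] at hsum
    nlinarith [hsum, mul_le_mul_of_nonneg_left hq1 hA0]

lemma sum_negMulLog_div (a : ι → ℝ) (ha : ∀ i, 0 ≤ a i) :
    ∑ i, a i * Real.log (a i / ∑ j, a j)
      = negMulLog (∑ j, a j) - ∑ i, negMulLog (a i) := by
  set A := ∑ j, a j with hA
  by_cases hA0 : A = 0
  · have h0 : ∀ i, a i = 0 := sum_zero_of_nonneg ha hA0
    simp [h0, hA0, Real.negMulLog]
  · have key : ∀ i, a i * Real.log (a i / A) = -negMulLog (a i) - a i * Real.log A := by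
      intro i
      rcases eq_or_lt_of_le (ha i) with h0 | hai
      · simp [← h0, Real.negMulLog]
      · rw [Real.log_div (ne_of_gt hai) hA0, Real.negMulLog]
        ring
    rw [Finset.sum_congr rfl (fun i _ => key i), Finset.sum_sub_distrib, ← Finset.sum_mul,
      ← hA, Real.negMulLog]
    simp only [Finset.sum_neg_distrib, Real.negMulLog]
    ring

lemma qstar_eval (a : ι → ℝ) (c : ℝ) (ha : ∀ i, 0 ≤ a i) :
    -∑ i, a i * Real.log (if (∑ j, a j) = 0 then c else a i / ∑ j, a j)
      = (∑ i, negMulLog (a i)) - negMulLog (∑ j, a j) := by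
  by_cases hA0 : (∑ j, a j) = 0
  · have h0 : ∀ i, a i = 0 := sum_zero_of_nonneg ha hA0
    simp [h0, hA0, Real.negMulLog]
  · simp only [if_neg hA0]
    rw [sum_negMulLog_div a ha]
    ring

lemma self_eval (a : ι → ℝ) :
    -∑ i, a i * Real.log (a i) = ∑ i, negMulLog (a i) := by
  simp [Real.negMulLog_eq_neg]

end helpers

section srcAux
variable {X Y1 Y2 U1 U2 : Type} [Fintype X] [Fintype Y1] [Fintype Y2] [Fintype U1] [Fintype U2]

lemma mul_sum_sum {α β : Type*} [Fintype α] [Fintype β] (c : ℝ) (f : α → ℝ) (g : β → ℝ) :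
    c * (∑ a, f a) * (∑ b, g b) = ∑ a, ∑ b, c * f a * g b := by
  rw [mul_assoc, Fintype.sum_mul_sum, Finset.mul_sum]
  exact Finset.sum_congr rfl fun a _ => by
    rw [Finset.mul_sum]
    exact Finset.sum_congr rfl fun b _ => by ring

variable (pX : X → ℝ) (W1 : X → Y1 → ℝ) (W2 : X → Y2 → ℝ)
variable (p1 : Y1 → U1 → ℝ) (p2 : Y2 → U2 → ℝ)

lemma sum_pU1X (hW1 : IsChan W1) (hp1 : IsChan p1) (x : X) :
    ∑ u1, pU1X W1 p1 x u1 = 1 := by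
  unfold pU1X
  rw [Finset.sum_comm]
  simp only [← Finset.mul_sum]
  simp [(fun y1 => (hp1 y1).2), (hW1 x).2]

lemma sum_pU2X (hW2 : IsChan W2) (hp2 : IsChan p2) (x : X) :
    ∑ u2, pU2X W2 p2 x u2 = 1 := by
  unfold pU2X
  rw [Finset.sum_comm]
  simp only [← Finset.mul_sum]
  simp [(fun y2 => (hp2 y2).2), (hW2 x).2]

lemma pU1X_nonneg (hW1 : IsChan W1) (hp1 : IsChan p1) (x : X) (u1 : U1) :
    0 ≤ pU1X W1 p1 x u1 :=
  Finset.sum_nonneg fun y1 _ => mul_nonneg ((hW1 x).1 y1) ((hp1 y1).1 u1)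

lemma pU2X_nonneg (hW2 : IsChan W2) (hp2 : IsChan p2) (x : X) (u2 : U2) :
    0 ≤ pU2X W2 p2 x u2 :=
  Finset.sum_nonneg fun y2 _ => mul_nonneg ((hW2 x).1 y2) ((hp2 y2).1 u2)

lemma pUUX_nonneg (hpX : IsPmf pX) (hW1 : IsChan W1) (hW2 : IsChan W2)
    (hp1 : IsChan p1) (hp2 : IsChan p2) (z : U1 × U2 × X) :
    0 ≤ pUUX pX W1 W2 p1 p2 z :=
  mul_nonneg (mul_nonneg (hpX.1 _) (pU1X_nonneg W1 p1 hW1 hp1 _ _))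
    (pU2X_nonneg W2 p2 hW2 hp2 _ _)

lemma pUU_nonneg (hpX : IsPmf pX) (hW1 : IsChan W1) (hW2 : IsChan W2)
    (hp1 : IsChan p1) (hp2 : IsChan p2) (u : U1 × U2) :
    0 ≤ pUU pX W1 W2 p1 p2 u :=
  Finset.sum_nonneg fun x _ => pUUX_nonneg pX W1 W2 p1 p2 hpX hW1 hW2 hp1 hp2 _

lemma pY1m_nonneg (hpX : IsPmf pX) (hW1 : IsChan W1) (y1 : Y1) :
    0 ≤ pY1m pX W1 y1 :=
  Finset.sum_nonneg fun x _ => mul_nonneg (hpX.1 x) ((hW1 x).1 y1)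

lemma pY2m_nonneg (hpX : IsPmf pX) (hW2 : IsChan W2) (y2 : Y2) :
    0 ≤ pY2m pX W2 y2 :=
  Finset.sum_nonneg fun x _ => mul_nonneg (hpX.1 x) ((hW2 x).1 y2)

lemma pU2m_nonneg (hpX : IsPmf pX) (hW2 : IsChan W2) (hp2 : IsChan p2) (u2 : U2) :
    0 ≤ pU2m pX W2 p2 u2 :=
  Finset.sum_nonneg fun y2 _ => mul_nonneg (pY2m_nonneg pX W2 hpX hW2 y2) ((hp2 y2).1 u2)

lemma pU2m_sum (hpX : IsPmf pX) (hW2 : IsChan W2) (hp2 : IsChan p2) :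
    ∑ u2, pU2m pX W2 p2 u2 = 1 := by
  unfold pU2m
  rw [Finset.sum_comm]
  simp only [← Finset.mul_sum]
  have h1 : ∀ y2, pY2m pX W2 y2 * (∑ u2, p2 y2 u2) = pY2m pX W2 y2 := by
    intro y2; rw [(hp2 y2).2, mul_one]
  rw [Finset.sum_congr rfl fun y2 _ => h1 y2]
  unfold pY2m
  rw [Finset.sum_comm]
  simp only [← Finset.mul_sum]
  simp [(fun x => (hW2 x).2), hpX.2]

lemma pUU_sum (hpX : IsPmf pX) (hW1 : IsChan W1) (hW2 : IsChan W2)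
    (hp1 : IsChan p1) (hp2 : IsChan p2) :
    ∑ u1, ∑ u2, pUU pX W1 W2 p1 p2 (u1, u2) = 1 := by
  unfold pUU pUUX
  calc ∑ u1, ∑ u2, ∑ x, pX x * pU1X W1 p1 x u1 * pU2X W2 p2 x u2
      = ∑ u1, ∑ x, ∑ u2, pX x * pU1X W1 p1 x u1 * pU2X W2 p2 x u2 :=
        Finset.sum_congr rfl (fun u1 _ => Finset.sum_comm)
    _ = ∑ u1, ∑ x, pX x * pU1X W1 p1 x u1 := by
        refine Finset.sum_congr rfl fun u1 _ => Finset.sum_congr rfl fun x _ => ?_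
        rw [← Finset.mul_sum, sum_pU2X W2 p2 hW2 hp2, mul_one]
    _ = ∑ x, ∑ u1, pX x * pU1X W1 p1 x u1 := Finset.sum_comm
    _ = ∑ x, pX x := by
        refine Finset.sum_congr rfl fun x _ => ?_
        rw [← Finset.mul_sum, sum_pU1X W1 p1 hW1 hp1, mul_one]
    _ = 1 := hpX.2


/-- `p(y₁,u₂)` helper marginal. -/
def Bm (pX : X → ℝ) (W1 : X → Y1 → ℝ) (W2 : X → Y2 → ℝ) (p2 : Y2 → U2 → ℝ) :
    Y1 → U2 → ℝ :=
  fun y1 u2 => ∑ x, pX x * W1 x y1 * pU2X W2 p2 x u2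

lemma mXU_eq (x : X) (u1 : U1) (u2 : U2) :
    mXU (ceoJoint pX W1 W2 p1 p2) (x, u1, u2) = pUUX pX W1 W2 p1 p2 (u1, u2, x) := by
  unfold mXU ceoJoint pUUX pU1X pU2X
  simp only
  rw [mul_sum_sum]
  exact Finset.sum_congr rfl fun y1 _ => Finset.sum_congr rfl fun y2 _ => by ring

lemma mU12_eq (u1 : U1) (u2 : U2) :
    mU12 (ceoJoint pX W1 W2 p1 p2) (u1, u2) = pUU pX W1 W2 p1 p2 (u1, u2) := by
  unfold mU12 pUU
  exact Finset.sum_congr rfl fun x _ => mXU_eq pX W1 W2 p1 p2 x u1 u2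

lemma mU2_eq (hW1 : IsChan W1) (hp1 : IsChan p1) (u2 : U2) :
    mU2 (ceoJoint pX W1 W2 p1 p2) u2 = pU2m pX W2 p2 u2 := by
  unfold mU2
  rw [Finset.sum_congr rfl fun u1 _ => mU12_eq pX W1 W2 p1 p2 u1 u2]
  unfold pUU pUUX
  calc ∑ u1, ∑ x, pX x * pU1X W1 p1 x u1 * pU2X W2 p2 x u2
      = ∑ x, ∑ u1, pX x * pU1X W1 p1 x u1 * pU2X W2 p2 x u2 := Finset.sum_comm
    _ = ∑ x, pX x * pU2X W2 p2 x u2 := by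
        refine Finset.sum_congr rfl fun x _ => ?_
        calc ∑ u1, pX x * pU1X W1 p1 x u1 * pU2X W2 p2 x u2
            = (∑ u1, pU1X W1 p1 x u1) * (pX x * pU2X W2 p2 x u2) := by
              rw [Finset.sum_mul]
              exact Finset.sum_congr rfl fun u1 _ => by ring
          _ = pX x * pU2X W2 p2 x u2 := by
              rw [sum_pU1X W1 p1 hW1 hp1, one_mul]
    _ = pU2m pX W2 p2 u2 := by
        unfold pU2X pU2m pY2m
        simp only [Finset.mul_sum, Finset.sum_mul]
        rw [Finset.sum_comm]
        exact Finset.sum_congr rfl fun y2 _ => Finset.sum_congr rfl fun x _ => by ring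

lemma mY1U_eq (y1 : Y1) (u1 : U1) (u2 : U2) :
    mY1U (ceoJoint pX W1 W2 p1 p2) (y1, u1, u2)
      = Bm pX W1 W2 p2 y1 u2 * p1 y1 u1 := by
  unfold mY1U ceoJoint Bm pU2X
  simp only
  rw [Finset.sum_mul]
  refine Finset.sum_congr rfl fun x _ => ?_
  rw [Finset.mul_sum, Finset.sum_mul]
  exact Finset.sum_congr rfl fun y2 _ => by ring

lemma mY1U2_eq (hp1 : IsChan p1) (y1 : Y1) (u2 : U2) :
    mY1U2 (ceoJoint pX W1 W2 p1 p2) (y1, u2) = Bm pX W1 W2 p2 y1 u2 := by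
  unfold mY1U2
  rw [Finset.sum_congr rfl fun u1 _ => mY1U_eq pX W1 W2 p1 p2 y1 u1 u2,
    ← Finset.mul_sum, (hp1 y1).2, mul_one]

lemma Bm_sum (hW2 : IsChan W2) (hp2 : IsChan p2) (y1 : Y1) :
    ∑ u2, Bm pX W1 W2 p2 y1 u2 = pY1m pX W1 y1 := by
  unfold Bm pY1m
  rw [Finset.sum_comm]
  refine Finset.sum_congr rfl fun x _ => ?_
  rw [← Finset.mul_sum, sum_pU2X W2 p2 hW2 hp2, mul_one]

lemma mY2U2_eq (hW1 : IsChan W1) (hp1 : IsChan p1) (y2 : Y2) (u2 : U2) :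
    mY2U2 (ceoJoint pX W1 W2 p1 p2) (y2, u2) = pY2m pX W2 y2 * p2 y2 u2 := by
  unfold mY2U2 ceoJoint pY2m
  simp only
  rw [Finset.sum_mul]
  refine Finset.sum_congr rfl fun x _ => ?_
  calc ∑ y1, ∑ u1, pX x * W1 x y1 * W2 x y2 * p1 y1 u1 * p2 y2 u2
      = ∑ y1, pX x * W1 x y1 * W2 x y2 * p2 y2 u2 := by
        refine Finset.sum_congr rfl fun y1 _ => ?_
        calc ∑ u1, pX x * W1 x y1 * W2 x y2 * p1 y1 u1 * p2 y2 u2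
            = (∑ u1, p1 y1 u1) * (pX x * W1 x y1 * W2 x y2 * p2 y2 u2) := by
              rw [Finset.sum_mul]
              exact Finset.sum_congr rfl fun u1 _ => by ring
          _ = pX x * W1 x y1 * W2 x y2 * p2 y2 u2 := by rw [(hp1 y1).2, one_mul]
    _ = (∑ y1, W1 x y1) * (pX x * W2 x y2 * p2 y2 u2) := by
        rw [Finset.sum_mul]
        exact Finset.sum_congr rfl fun y1 _ => by ring
    _ = pX x * W2 x y2 * p2 y2 u2 := by rw [(hW1 x).2, one_mul]

lemma mY2_eq (hW1 : IsChan W1) (hp1 : IsChan p1) (hp2 : IsChan p2) (y2 : Y2) :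
    mY2 (ceoJoint pX W1 W2 p1 p2) y2 = pY2m pX W2 y2 := by
  unfold mY2
  rw [Finset.sum_congr rfl fun u2 _ => mY2U2_eq pX W1 W2 p1 p2 hW1 hp1 y2 u2,
    ← Finset.mul_sum, (hp2 y2).2, mul_one]

lemma ent_mXU :
    ent (mXU (ceoJoint pX W1 W2 p1 p2))
      = ∑ u1, ∑ u2, ∑ x, negMulLog (pUUX pX W1 W2 p1 p2 (u1, u2, x)) := by
  unfold ent
  rw [Fintype.sum_prod_type]
  simp only [Fintype.sum_prod_type]
  rw [Finset.sum_congr rfl fun x _ => Finset.sum_congr rfl fun u1 _ =>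
    Finset.sum_congr rfl fun u2 _ => congrArg negMulLog (mXU_eq pX W1 W2 p1 p2 x u1 u2),
    Finset.sum_comm]
  exact Finset.sum_congr rfl fun u1 _ => Finset.sum_comm

lemma ent_mU12 :
    ent (mU12 (ceoJoint pX W1 W2 p1 p2))
      = ∑ u1, ∑ u2, negMulLog (pUU pX W1 W2 p1 p2 (u1, u2)) := by
  unfold ent
  rw [Fintype.sum_prod_type]
  exact Finset.sum_congr rfl fun u1 _ => Finset.sum_congr rfl fun u2 _ =>
    congrArg negMulLog (mU12_eq pX W1 W2 p1 p2 u1 u2)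

lemma ent_mU2 (hW1 : IsChan W1) (hp1 : IsChan p1) :
    ent (mU2 (ceoJoint pX W1 W2 p1 p2)) = ∑ u2, negMulLog (pU2m pX W2 p2 u2) :=
  Finset.sum_congr rfl fun u2 _ =>
    congrArg negMulLog (mU2_eq pX W1 W2 p1 p2 hW1 hp1 u2)

lemma ent_mY1U2 (hp1 : IsChan p1) :
    ent (mY1U2 (ceoJoint pX W1 W2 p1 p2))
      = ∑ y1, ∑ u2, negMulLog (Bm pX W1 W2 p2 y1 u2) := by
  unfold ent
  rw [Fintype.sum_prod_type]
  exact Finset.sum_congr rfl fun y1 _ => Finset.sum_congr rfl fun u2 _ =>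
    congrArg negMulLog (mY1U2_eq pX W1 W2 p1 p2 hp1 y1 u2)

lemma ent_mY1U (hW2 : IsChan W2) (hp1 : IsChan p1) (hp2 : IsChan p2) :
    ent (mY1U (ceoJoint pX W1 W2 p1 p2))
      = (∑ y1, ∑ u2, negMulLog (Bm pX W1 W2 p2 y1 u2))
        + ∑ y1, pY1m pX W1 y1 * ∑ u1, negMulLog (p1 y1 u1) := by
  unfold ent
  rw [Fintype.sum_prod_type]
  simp only [Fintype.sum_prod_type]
  rw [← Finset.sum_add_distrib]
  refine Finset.sum_congr rfl fun y1 _ => ?_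
  have step1 : ∀ u1 : U1, ∑ u2, negMulLog (mY1U (ceoJoint pX W1 W2 p1 p2) (y1, u1, u2))
      = p1 y1 u1 * (∑ u2, negMulLog (Bm pX W1 W2 p2 y1 u2))
        + pY1m pX W1 y1 * negMulLog (p1 y1 u1) := by
    intro u1
    rw [Finset.sum_congr rfl fun u2 _ => by
      rw [mY1U_eq pX W1 W2 p1 p2 y1 u1 u2, Real.negMulLog_mul]]
    rw [Finset.sum_add_distrib, ← Finset.mul_sum, ← Finset.sum_mul,
      Bm_sum pX W1 W2 p2 hW2 hp2 y1]
  rw [Finset.sum_congr rfl fun u1 _ => step1 u1, Finset.sum_add_distrib,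
    ← Finset.sum_mul, (hp1 y1).2, one_mul, ← Finset.mul_sum]

lemma ent_mY2U2 (hpX : IsPmf pX) (hW1 : IsChan W1) (hp1 : IsChan p1) (hp2 : IsChan p2) :
    ent (mY2U2 (ceoJoint pX W1 W2 p1 p2))
      = (∑ y2, negMulLog (pY2m pX W2 y2))
        + ∑ y2, pY2m pX W2 y2 * ∑ u2, negMulLog (p2 y2 u2) := by
  unfold ent
  rw [Fintype.sum_prod_type]
  rw [← Finset.sum_add_distrib]
  refine Finset.sum_congr rfl fun y2 _ => ?_
  rw [Finset.sum_congr rfl fun u2 _ => by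
    rw [mY2U2_eq pX W1 W2 p1 p2 hW1 hp1 y2 u2, Real.negMulLog_mul]]
  rw [Finset.sum_add_distrib, ← Finset.sum_mul, (hp2 y2).2, one_mul, ← Finset.mul_sum]

lemma ent_mY2 (hW1 : IsChan W1) (hp1 : IsChan p1) (hp2 : IsChan p2) :
    ent (mY2 (ceoJoint pX W1 W2 p1 p2)) = ∑ y2, negMulLog (pY2m pX W2 y2) :=
  Finset.sum_congr rfl fun y2 _ =>
    congrArg negMulLog (mY2_eq pX W1 W2 p1 p2 hW1 hp1 hp2 y2)

lemma Fs_repr (s1 s2 : ℝ) (hpX : IsPmf pX) (hW1 : IsChan W1) (hW2 : IsChan W2)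
    (hp1 : IsChan p1) (hp2 : IsChan p2) :
    Fs s1 s2 (ceoJoint pX W1 W2 p1 p2)
      = ((∑ u1, ∑ u2, ∑ x, negMulLog (pUUX pX W1 W2 p1 p2 (u1, u2, x)))
          - ∑ u1, ∑ u2, negMulLog (pUU pX W1 W2 p1 p2 (u1, u2)))
        + s1 * (∑ u1, ∑ u2, negMulLog (pUU pX W1 W2 p1 p2 (u1, u2)))
        + s2 * (∑ u2, negMulLog (pU2m pX W2 p2 u2))
        + (s1 * (∑ u1, ∑ y1, p1 y1 u1 * pY1m pX W1 y1 * Real.log (p1 y1 u1))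
           + s2 * (∑ u2, ∑ y2, p2 y2 u2 * pY2m pX W2 y2 * Real.log (p2 y2 u2))
           + s1 * (∑ u2, pU2m pX W2 p2 u2 * Real.log (pU2m pX W2 p2 u2))) := by
  have t1 : ∑ u1, ∑ y1, p1 y1 u1 * pY1m pX W1 y1 * Real.log (p1 y1 u1)
      = -∑ y1, pY1m pX W1 y1 * ∑ u1, negMulLog (p1 y1 u1) := by
    rw [Finset.sum_comm, ← Finset.sum_neg_distrib]
    refine Finset.sum_congr rfl fun y1 _ => ?_
    rw [Finset.mul_sum, ← Finset.sum_neg_distrib]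
    exact Finset.sum_congr rfl fun u1 _ => by simp only [Real.negMulLog]; ring
  have t2 : ∑ u2, ∑ y2, p2 y2 u2 * pY2m pX W2 y2 * Real.log (p2 y2 u2)
      = -∑ y2, pY2m pX W2 y2 * ∑ u2, negMulLog (p2 y2 u2) := by
    rw [Finset.sum_comm, ← Finset.sum_neg_distrib]
    refine Finset.sum_congr rfl fun y2 _ => ?_
    rw [Finset.mul_sum, ← Finset.sum_neg_distrib]
    exact Finset.sum_congr rfl fun u2 _ => by simp only [Real.negMulLog]; ring
  have t3 : ∑ u2, pU2m pX W2 p2 u2 * Real.log (pU2m pX W2 p2 u2)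
      = -∑ u2, negMulLog (pU2m pX W2 p2 u2) := by
    rw [← Finset.sum_neg_distrib]
    exact Finset.sum_congr rfl fun u2 _ => by simp only [Real.negMulLog]; ring
  rw [t1, t2, t3]
  unfold Fs condHX I1c I2m
  rw [ent_mXU pX W1 W2 p1 p2, ent_mU12 pX W1 W2 p1 p2, ent_mU2 pX W1 W2 p1 p2 hW1 hp1,
    ent_mY1U2 pX W1 W2 p1 p2 hp1, ent_mY1U pX W1 W2 p1 p2 hW2 hp1 hp2,
    ent_mY2U2 pX W1 W2 p1 p2 hpX hW1 hp1 hp2, ent_mY2 pX W1 W2 p1 p2 hW1 hp1 hp2]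
  ring

lemma mul_pos_ne_bot {s : ℝ} (hs : 0 < s) {x : EReal} (hx : x ≠ ⊥) : (s : EReal) * x ≠ ⊥ := by
  induction x using EReal.rec with
  | bot => exact absurd rfl hx
  | coe r => rw [← EReal.coe_mul]; exact EReal.coe_ne_bot _
  | top =>
      rw [EReal.mul_top_of_pos (by exact_mod_cast hs)]
      simp

lemma pUU_pmf (hpX : IsPmf pX) (hW1 : IsChan W1) (hW2 : IsChan W2)
    (hp1 : IsChan p1) (hp2 : IsChan p2) : IsPmf (pUU pX W1 W2 p1 p2) :=
  ⟨pUU_nonneg pX W1 W2 p1 p2 hpX hW1 hW2 hp1 hp2, by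
    rw [Fintype.sum_prod_type]
    exact pUU_sum pX W1 W2 p1 p2 hpX hW1 hW2 hp1 hp2⟩

lemma pU2m_pmf (hpX : IsPmf pX) (hW2 : IsChan W2) (hp2 : IsChan p2) :
    IsPmf (pU2m pX W2 p2) :=
  ⟨pU2m_nonneg pX W2 p2 hpX hW2 hp2, pU2m_sum pX W2 p2 hpX hW2 hp2⟩

lemma qXstar_chan (hpX : IsPmf pX) (hW1 : IsChan W1) (hW2 : IsChan W2)
    (hp1 : IsChan p1) (hp2 : IsChan p2) : IsChan (qXstar pX W1 W2 p1 p2) := by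
  have hXne : Nonempty X := by
    by_contra hc
    have h0 : ∑ x, pX x = 0 := by
      rw [Finset.sum_eq_zero]
      intro x _
      exact absurd ⟨x⟩ hc
    rw [hpX.2] at h0
    norm_num at h0
  have hcard : (0 : ℝ) < Fintype.card X := by
    exact_mod_cast Fintype.card_pos_iff.2 hXne
  intro u
  unfold qXstar
  by_cases h : pUU pX W1 W2 p1 p2 u = 0
  · simp only [if_pos h]
    refine ⟨fun x => by positivity, ?_⟩
    rw [Finset.sum_const, Finset.card_univ, nsmul_eq_mul]
    field_simp
  · simp only [if_neg h]
    have hA : 0 < pUU pX W1 W2 p1 p2 u :=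
      lt_of_le_of_ne (pUU_nonneg pX W1 W2 p1 p2 hpX hW1 hW2 hp1 hp2 u) (Ne.symm h)
    refine ⟨fun x => div_nonneg
      (pUUX_nonneg pX W1 W2 p1 p2 hpX hW1 hW2 hp1 hp2 _) hA.le, ?_⟩
    rw [← Finset.sum_div]
    exact div_self h

lemma FsPQE_qstar (s1 s2 : ℝ) (hpX : IsPmf pX) (hW1 : IsChan W1) (hW2 : IsChan W2)
    (hp1 : IsChan p1) (hp2 : IsChan p2) :
    FsPQE s1 s2 pX W1 W2 p1 p2 (qXstar pX W1 W2 p1 p2) (pUU pX W1 W2 p1 p2)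
        (pU2m pX W2 p2)
      = ((Fs s1 s2 (ceoJoint pX W1 W2 p1 p2) : ℝ) : EReal) := by
  have hblock1 : ∀ u1 u2,
      ∑ x, nlogE (pUUX pX W1 W2 p1 p2 (u1, u2, x)) (qXstar pX W1 W2 p1 p2 (u1, u2) x)
        = (((∑ x, negMulLog (pUUX pX W1 W2 p1 p2 (u1, u2, x)))
            - negMulLog (pUU pX W1 W2 p1 p2 (u1, u2)) : ℝ) : EReal) := by
    intro u1 u2
    have ha : ∀ x, 0 ≤ pUUX pX W1 W2 p1 p2 (u1, u2, x) :=
      fun x => pUUX_nonneg pX W1 W2 p1 p2 hpX hW1 hW2 hp1 hp2 _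
    have hfin : ∀ x, 0 < pUUX pX W1 W2 p1 p2 (u1, u2, x)
        → qXstar pX W1 W2 p1 p2 (u1, u2) x ≠ 0 := by
      intro x hx
      have hle : pUUX pX W1 W2 p1 p2 (u1, u2, x)
          ≤ ∑ x', pUUX pX W1 W2 p1 p2 (u1, u2, x') :=
        Finset.single_le_sum (fun i _ => ha i) (Finset.mem_univ x)
      have hpu : 0 < pUU pX W1 W2 p1 p2 (u1, u2) := lt_of_lt_of_le hx hle
      unfold qXstar
      rw [if_neg (ne_of_gt hpu)]
      exact div_ne_zero (ne_of_gt hx) (ne_of_gt hpu)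
    rw [nlogE_sum_finite _ _ hfin]
    exact_mod_cast congrArg (fun r : ℝ => (r : EReal))
      (qstar_eval (fun x => pUUX pX W1 W2 p1 p2 (u1, u2, x)) ((Fintype.card X : ℝ))⁻¹ ha)
  have hblock2 : ∀ u1 : U1,
      ∑ u2, nlogE (pUU pX W1 W2 p1 p2 (u1, u2)) (pUU pX W1 W2 p1 p2 (u1, u2))
        = ((∑ u2, negMulLog (pUU pX W1 W2 p1 p2 (u1, u2)) : ℝ) : EReal) := by
    intro u1
    rw [nlogE_sum_finite _ _ (fun u2 h hq => absurd hq (ne_of_gt h))]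
    exact_mod_cast congrArg (fun r : ℝ => (r : EReal))
      (self_eval (fun u2 => pUU pX W1 W2 p1 p2 (u1, u2)))
  have hblock3 : ∑ u2, nlogE (pU2m pX W2 p2 u2) (pU2m pX W2 p2 u2)
      = ((∑ u2, negMulLog (pU2m pX W2 p2 u2) : ℝ) : EReal) := by
    rw [nlogE_sum_finite _ _ (fun u2 h hq => absurd hq (ne_of_gt h))]
    exact_mod_cast congrArg (fun r : ℝ => (r : EReal)) (self_eval (pU2m pX W2 p2))
  unfold FsPQE
  rw [Finset.sum_congr rfl fun u1 _ => Finset.sum_congr rfl fun u2 _ => hblock1 u1 u2,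
    Finset.sum_congr rfl fun u1 (_ : u1 ∈ Finset.univ) => (ereal_coe_fsum Finset.univ _).symm,
    ← ereal_coe_fsum,
    Finset.sum_congr rfl fun u1 (_ : u1 ∈ Finset.univ) => hblock2 u1,
    ← ereal_coe_fsum, hblock3,
    ← EReal.coe_mul, ← EReal.coe_mul, ← EReal.coe_add, ← EReal.coe_add, ← EReal.coe_add]
  norm_cast
  rw [Fs_repr pX W1 W2 p1 p2 s1 s2 hpX hW1 hW2 hp1 hp2]
  try simp only [Finset.sum_sub_distrib]
  try ring

lemma FsPQE_ge {s1 s2 : ℝ} (hs1 : 0 < s1) (hs2 : 0 < s2)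
    (hpX : IsPmf pX) (hW1 : IsChan W1) (hW2 : IsChan W2)
    (hp1 : IsChan p1) (hp2 : IsChan p2)
    (qX : U1 × U2 → X → ℝ) (qUU : U1 × U2 → ℝ) (qU2 : U2 → ℝ)
    (hqX : IsChan qX) (hqUU : IsPmf qUU) (hqU2 : IsPmf qU2) :
    ((Fs s1 s2 (ceoJoint pX W1 W2 p1 p2) : ℝ) : EReal)
      ≤ FsPQE s1 s2 pX W1 W2 p1 p2 qX qUU qU2 := by
  have haX : ∀ (u1 : U1) (u2 : U2) (x : X), 0 ≤ pUUX pX W1 W2 p1 p2 (u1, u2, x) :=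
    fun u1 u2 x => pUUX_nonneg pX W1 W2 p1 p2 hpX hW1 hW2 hp1 hp2 _
  have haU : ∀ u : U1 × U2, 0 ≤ pUU pX W1 W2 p1 p2 u :=
    pUU_nonneg pX W1 W2 p1 p2 hpX hW1 hW2 hp1 hp2
  have haU2 : ∀ u2, 0 ≤ pU2m pX W2 p2 u2 := pU2m_nonneg pX W2 p2 hpX hW2 hp2
  unfold FsPQE
  rw [show (∑ u1, ∑ u2, nlogE (pUU pX W1 W2 p1 p2 (u1, u2)) (qUU (u1, u2)))
      = ∑ u : U1 × U2, nlogE (pUU pX W1 W2 p1 p2 u) (qUU u) from by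
        rw [Fintype.sum_prod_type]]
  have hS1b : (∑ u1, ∑ u2, ∑ x,
      nlogE (pUUX pX W1 W2 p1 p2 (u1, u2, x)) (qX (u1, u2) x)) ≠ ⊥ :=
    ereal_sum_ne_bot fun _ _ => ereal_sum_ne_bot fun _ _ =>
      ereal_sum_ne_bot fun _ _ => nlogE_ne_bot _ _
  have hS2b : (∑ u : U1 × U2, nlogE (pUU pX W1 W2 p1 p2 u) (qUU u)) ≠ ⊥ :=
    ereal_sum_ne_bot fun _ _ => nlogE_ne_bot _ _
  have hS3b : (∑ u2, nlogE (pU2m pX W2 p2 u2) (qU2 u2)) ≠ ⊥ :=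
    ereal_sum_ne_bot fun _ _ => nlogE_ne_bot _ _
  by_cases hbad1 : ∃ (u1 : U1) (u2 : U2) (x : X),
      0 < pUUX pX W1 W2 p1 p2 (u1, u2, x) ∧ qX (u1, u2) x = 0
  · obtain ⟨u1, u2, x, hb⟩ := hbad1
    have h1 : (∑ u1, ∑ u2, ∑ x,
        nlogE (pUUX pX W1 W2 p1 p2 (u1, u2, x)) (qX (u1, u2) x)) = ⊤ :=
      ereal_sum_eq_top (fun i _ => ereal_sum_ne_bot fun j _ =>
          ereal_sum_ne_bot fun k _ => nlogE_ne_bot _ _) (Finset.mem_univ u1)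
        (ereal_sum_eq_top (fun j _ => ereal_sum_ne_bot fun k _ => nlogE_ne_bot _ _)
          (Finset.mem_univ u2) (nlogE_sum_top _ _ hb))
    rw [h1, EReal.top_add_of_ne_bot (mul_pos_ne_bot hs1 hS2b),
      EReal.top_add_of_ne_bot (mul_pos_ne_bot hs2 hS3b),
      EReal.top_add_of_ne_bot (EReal.coe_ne_bot _)]
    exact le_top
  by_cases hbad2 : ∃ u : U1 × U2, 0 < pUU pX W1 W2 p1 p2 u ∧ qUU u = 0
  · obtain ⟨u, hb⟩ := hbad2
    have h2 : (∑ u : U1 × U2, nlogE (pUU pX W1 W2 p1 p2 u) (qUU u)) = ⊤ :=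
      nlogE_sum_top _ _ hb
    rw [h2, EReal.mul_top_of_pos (show (0 : EReal) < (s1 : EReal) by exact_mod_cast hs1),
      EReal.add_top_of_ne_bot hS1b,
      EReal.top_add_of_ne_bot (mul_pos_ne_bot hs2 hS3b),
      EReal.top_add_of_ne_bot (EReal.coe_ne_bot _)]
    exact le_top
  by_cases hbad3 : ∃ u2, 0 < pU2m pX W2 p2 u2 ∧ qU2 u2 = 0
  · obtain ⟨u2, hb⟩ := hbad3
    have h3 : (∑ u2, nlogE (pU2m pX W2 p2 u2) (qU2 u2)) = ⊤ := nlogE_sum_top _ _ hb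
    have h12 : (∑ u1, ∑ u2, ∑ x,
          nlogE (pUUX pX W1 W2 p1 p2 (u1, u2, x)) (qX (u1, u2) x))
        + (s1 : EReal) * (∑ u : U1 × U2, nlogE (pUU pX W1 W2 p1 p2 u) (qUU u)) ≠ ⊥ := by
      intro hc
      rcases EReal.add_eq_bot_iff.1 hc with hc | hc
      · exact hS1b hc
      · exact mul_pos_ne_bot hs1 hS2b hc
    rw [h3, EReal.mul_top_of_pos (show (0 : EReal) < (s2 : EReal) by exact_mod_cast hs2),
      EReal.add_top_of_ne_bot h12, EReal.top_add_of_ne_bot (EReal.coe_ne_bot _)]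
    exact le_top
  push_neg at hbad1 hbad2 hbad3
  rw [Finset.sum_congr rfl fun u1 _ => Finset.sum_congr rfl fun u2 _ =>
      nlogE_sum_finite _ _ (hbad1 u1 u2),
    Finset.sum_congr rfl fun u1 (_ : u1 ∈ Finset.univ) => (ereal_coe_fsum Finset.univ _).symm,
    ← ereal_coe_fsum, nlogE_sum_finite _ _ hbad2, nlogE_sum_finite _ _ hbad3,
    ← EReal.coe_mul, ← EReal.coe_mul, ← EReal.coe_add, ← EReal.coe_add, ← EReal.coe_add,
    EReal.coe_le_coe_iff]
  have I1 : ∀ (u1 : U1) (u2 : U2),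
      (∑ x, negMulLog (pUUX pX W1 W2 p1 p2 (u1, u2, x)))
          - negMulLog (pUU pX W1 W2 p1 p2 (u1, u2))
        ≤ -∑ x, pUUX pX W1 W2 p1 p2 (u1, u2, x) * Real.log (qX (u1, u2) x) := by
    intro u1 u2
    have g := gibbs_real (fun x => pUUX pX W1 W2 p1 p2 (u1, u2, x)) (qX (u1, u2))
      (haX u1 u2) (hqX (u1, u2)).1 (le_of_eq (hqX (u1, u2)).2) (hbad1 u1 u2)
    rw [sum_negMulLog_div _ (haX u1 u2)] at g
    have hr : pUU pX W1 W2 p1 p2 (u1, u2) = ∑ x, pUUX pX W1 W2 p1 p2 (u1, u2, x) := rfl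
    rw [hr]
    linarith
  have I1' : (∑ u1, ∑ u2, ((∑ x, negMulLog (pUUX pX W1 W2 p1 p2 (u1, u2, x)))
        - negMulLog (pUU pX W1 W2 p1 p2 (u1, u2))))
      ≤ ∑ u1, ∑ u2, -∑ x, pUUX pX W1 W2 p1 p2 (u1, u2, x) * Real.log (qX (u1, u2) x) :=
    Finset.sum_le_sum fun u1 _ => Finset.sum_le_sum fun u2 _ => I1 u1 u2
  simp only [Finset.sum_sub_distrib] at I1'
  rw [show (∑ u1, ∑ u2, negMulLog (pUU pX W1 W2 p1 p2 (u1, u2)))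
      = ∑ u : U1 × U2, negMulLog (pUU pX W1 W2 p1 p2 u) from by
        rw [Fintype.sum_prod_type]] at I1'
  have hnml1 : negMulLog (1 : ℝ) = 0 := by simp [Real.negMulLog]
  have I2 : ∑ u : U1 × U2, negMulLog (pUU pX W1 W2 p1 p2 u)
      ≤ -∑ u : U1 × U2, pUU pX W1 W2 p1 p2 u * Real.log (qUU u) := by
    have g := gibbs_real (pUU pX W1 W2 p1 p2) qUU haU hqUU.1 (le_of_eq hqUU.2) hbad2
    rw [sum_negMulLog_div _ haU,
      (pUU_pmf pX W1 W2 p1 p2 hpX hW1 hW2 hp1 hp2).2, hnml1] at g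
    linarith
  have I3 : ∑ u2, negMulLog (pU2m pX W2 p2 u2)
      ≤ -∑ u2, pU2m pX W2 p2 u2 * Real.log (qU2 u2) := by
    have g := gibbs_real (pU2m pX W2 p2) qU2 haU2 hqU2.1 (le_of_eq hqU2.2) hbad3
    rw [sum_negMulLog_div _ haU2, pU2m_sum pX W2 p2 hpX hW2 hp2, hnml1] at g
    linarith
  rw [Fs_repr pX W1 W2 p1 p2 s1 s2 hpX hW1 hW2 hp1 hp2,
    show (∑ u1, ∑ u2, negMulLog (pUU pX W1 W2 p1 p2 (u1, u2)))
      = ∑ u : U1 × U2, negMulLog (pUU pX W1 W2 p1 p2 u) from by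
        rw [Fintype.sum_prod_type]]
  have m2 := mul_le_mul_of_nonneg_left I2 hs1.le
  have m3 := mul_le_mul_of_nonneg_left I3 hs2.le
  linarith [I1']

end srcAux

/-- **Proposition 2** (double-minimization representation):
`min_P inf_Q F_s(P,Q) = min_P F_s(P)`, and any `P*` attaining `min_P F_s(P)` attains the
double minimization together with the auxiliary pmfs `Q` induced by `P*`. -/
theorem ceo_double_minimization
    (pX : X → ℝ) (W1 : X → Y1 → ℝ) (W2 : X → Y2 → ℝ)
    (hpX : IsPmf pX) (hW1 : IsChan W1) (hW2 : IsChan W2)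
    (s1 s2 : ℝ) (hs1 : 0 < s1) (hs2 : 0 < s2)
    (P1s : Y1 → U1 → ℝ) (P2s : Y2 → U2 → ℝ) (hP1 : IsChan P1s) (hP2 : IsChan P2s)
    (hmin : ∀ (p1 : Y1 → U1 → ℝ) (p2 : Y2 → U2 → ℝ), IsChan p1 → IsChan p2 →
      Fs s1 s2 (ceoJoint pX W1 W2 P1s P2s) ≤ Fs s1 s2 (ceoJoint pX W1 W2 p1 p2)) :
    sInf {v : EReal | ∃ p1 : Y1 → U1 → ℝ, ∃ p2 : Y2 → U2 → ℝ,
        ∃ qX : U1 × U2 → X → ℝ, ∃ qUU : U1 × U2 → ℝ, ∃ qU2 : U2 → ℝ,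
        IsChan p1 ∧ IsChan p2 ∧ IsChan qX ∧ IsPmf qUU ∧ IsPmf qU2 ∧
        v = FsPQE s1 s2 pX W1 W2 p1 p2 qX qUU qU2}
      = ((Fs s1 s2 (ceoJoint pX W1 W2 P1s P2s) : ℝ) : EReal) ∧
    FsPQE s1 s2 pX W1 W2 P1s P2s (qXstar pX W1 W2 P1s P2s)
        (pUU pX W1 W2 P1s P2s) (pU2m pX W2 P2s)
      = ((Fs s1 s2 (ceoJoint pX W1 W2 P1s P2s) : ℝ) : EReal) := by
  have hpart2 := FsPQE_qstar pX W1 W2 P1s P2s s1 s2 hpX hW1 hW2 hP1 hP2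
  refine ⟨le_antisymm ?_ ?_, hpart2⟩
  · exact sInf_le ⟨P1s, P2s, qXstar pX W1 W2 P1s P2s, pUU pX W1 W2 P1s P2s, pU2m pX W2 P2s,
      hP1, hP2, qXstar_chan pX W1 W2 P1s P2s hpX hW1 hW2 hP1 hP2,
      pUU_pmf pX W1 W2 P1s P2s hpX hW1 hW2 hP1 hP2, pU2m_pmf pX W2 P2s hpX hW2 hP2,
      hpart2.symm⟩
  · refine le_sInf ?_
    rintro v ⟨p1, p2, qX, qUU, qU2, h1, h2, h3, h4, h5, rfl⟩
    calc ((Fs s1 s2 (ceoJoint pX W1 W2 P1s P2s) : ℝ) : EReal)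
        ≤ ((Fs s1 s2 (ceoJoint pX W1 W2 p1 p2) : ℝ) : EReal) :=
          EReal.coe_le_coe_iff.2 (hmin p1 p2 h1 h2)
      _ ≤ FsPQE s1 s2 pX W1 W2 p1 p2 qX qUU qU2 :=
          FsPQE_ge pX W1 W2 p1 p2 hs1 hs2 hpX hW1 hW2 h1 h2 qX qUU qU2 h3 h4 h5
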